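/- In dimension d = 2, the l₁-norm measure T₁(ρ) = ∑_{i,j}|ρ_{ij} - 1/2| satisfies T₁(|f*⟩⟨f*|) = (3+√3)/2 > 2 = T₁(|f₂⟩⟨f₂|), where |f₂⟩ = (|0⟩-|1⟩)/√2 is the maximal-texture Fourier state and |f*⟩ = (√3/2)|0⟩ - (1/2)|1⟩; hence T₁ can increase under a free operation mapping |f₂⟩ to |f*⟩ and violates monotonicity. -/

import Mathlib

open Matrix BigOperators Finset ComplexOrder

noncomputable section

abbrev Mat (d : ℕ) := Matrix (Fin d) (Fin d) ℂ

def IsDensity {d : ℕ} (ρ : Mat d) : Prop := ρ.PosSemidef ∧ ρ.trace = 1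

def outer {d : ℕ} (ψ : Fin d → ℂ) : Mat d := Matrix.vecMulVec ψ (star ψ)

def f1vec (d : ℕ) : Fin d → ℂ := fun _ => ((Real.sqrt d)⁻¹ : ℝ)

def f1 (d : ℕ) : Mat d := outer (f1vec d)

noncomputable def traceNorm {d : ℕ} (A : Mat d) : ℝ :=
  ((Matrix.posSemidef_conjTranspose_mul_self A).1.eigenvectorUnitary.1 *
    diagonal ((fun x : ℝ => (x : ℂ)) ∘ (√·) ∘ (Matrix.posSemidef_conjTranspose_mul_self A).1.eigenvalues) *
    (star (Matrix.posSemidef_conjTranspose_mul_self A).1.eigenvectorUnitary : Mat d)).trace.re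

noncomputable def Ttr {d : ℕ} (ρ : Mat d) : ℝ := (1/2) * traceNorm (ρ - f1 d)

noncomputable def fidF1 {d : ℕ} (ρ : Mat d) : ℝ := (star (f1vec d) ⬝ᵥ (ρ *ᵥ f1vec d)).re

noncomputable def TF {d : ℕ} (ρ : Mat d) : ℝ := 1 - fidF1 ρ

noncomputable def TB {d : ℕ} (ρ : Mat d) : ℝ := 2 * (1 - Real.sqrt (fidF1 ρ))

noncomputable def T1 (ρ : Mat 2) : ℝ := ∑ i, ∑ j, ‖ρ i j - (f1 2) i j‖

noncomputable def f2vec : Fin 2 → ℂ := ![((Real.sqrt 2)⁻¹ : ℝ), (-(Real.sqrt 2)⁻¹ : ℝ)]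

noncomputable def fstarvec : Fin 2 → ℂ := ![((Real.sqrt 3 / 2 : ℝ)), ((-(1/2) : ℝ))]

lemma f1_apply (i j : Fin 2) : f1 2 i j = ((1/2 : ℝ) : ℂ) := by
  have h : (Real.sqrt 2)⁻¹ * (Real.sqrt 2)⁻¹ = 1/2 := by
    rw [← mul_inv, Real.mul_self_sqrt (by norm_num)]; norm_num
  simp only [f1, outer, f1vec, vecMulVec_apply, Pi.star_apply, Complex.star_def,
    Complex.conj_ofReal]
  rw [← Complex.ofReal_mul]; norm_num [h]

lemma h3 : Real.sqrt 3 * Real.sqrt 3 = 3 := Real.mul_self_sqrt (by norm_num)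
lemma h3lb : 1 ≤ Real.sqrt 3 := by nlinarith [h3, Real.sqrt_nonneg 3]
lemma h3ub : Real.sqrt 3 ≤ 2 := by nlinarith [h3, Real.sqrt_nonneg 3]

lemma T1star : T1 (outer fstarvec) = (3 + Real.sqrt 3) / 2 := by
  simp only [T1, Fin.sum_univ_two, f1_apply, outer, fstarvec, vecMulVec_apply]
  simp only [Matrix.cons_val_zero, Matrix.cons_val_one, Matrix.head_cons, Pi.star_apply,
    Complex.star_def, Complex.conj_ofReal, ← Complex.ofReal_mul, ← Complex.ofReal_sub,
    Complex.norm_real, Real.norm_eq_abs]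
  rw [abs_of_nonneg (by nlinarith [h3]), abs_of_nonpos (by nlinarith [h3lb]),
    abs_of_nonpos (by nlinarith [h3lb]), abs_of_nonpos (by norm_num)]
  nlinarith [h3]

lemma T1f2 : T1 (outer f2vec) = 2 := by
  have h : (Real.sqrt 2)⁻¹ * (Real.sqrt 2)⁻¹ = 1/2 := by
    rw [← mul_inv, Real.mul_self_sqrt (by norm_num)]; norm_num
  simp only [T1, Fin.sum_univ_two, f1_apply, outer, f2vec, vecMulVec_apply]
  simp only [Matrix.cons_val_zero, Matrix.cons_val_one, Matrix.head_cons, Pi.star_apply,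
    Complex.star_def, Complex.conj_ofReal, ← Complex.ofReal_neg, ← Complex.ofReal_mul,
    ← Complex.ofReal_sub, Complex.norm_real, Real.norm_eq_abs]
  rw [h]  -- maybe not needed
  norm_num [h]

def K : Fin 2 → Mat 2 := ![f1 2, Matrix.vecMulVec fstarvec (star f2vec)]

lemma h2 : (Real.sqrt 2)⁻¹ * (Real.sqrt 2)⁻¹ = 1/2 := by
  rw [← mul_inv, Real.mul_self_sqrt (by norm_num)]; norm_num

lemma hs4 : (Real.sqrt 2)⁻¹*(Real.sqrt 2)⁻¹*((Real.sqrt 2)⁻¹*(Real.sqrt 2)⁻¹) = 1/4 := by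
  rw [h2]; norm_num
lemma hm1 : Real.sqrt 3*Real.sqrt 3*((Real.sqrt 2)⁻¹*(Real.sqrt 2)⁻¹*((Real.sqrt 2)⁻¹*(Real.sqrt 2)⁻¹)) = 3/4 := by
  rw [hs4, h3]; norm_num
lemma hm2 : Real.sqrt 3*((Real.sqrt 2)⁻¹*(Real.sqrt 2)⁻¹*((Real.sqrt 2)⁻¹*(Real.sqrt 2)⁻¹)) = Real.sqrt 3/4 := by
  rw [hs4]; ring
lemma hm3 : Real.sqrt 3*((Real.sqrt 2)⁻¹*(Real.sqrt 2)⁻¹) = Real.sqrt 3/2 := by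
  rw [h2]; ring
lemma hm4 : Real.sqrt 3*Real.sqrt 3*((Real.sqrt 2)⁻¹*(Real.sqrt 2)⁻¹) = 3/2 := by
  rw [h2, h3]; norm_num

lemma kraus1 : ∑ i, (K i)ᴴ * K i = (1 : Mat 2) := by
  ext i j
  fin_cases i <;> fin_cases j <;>
  · simp only [K, Fin.sum_univ_two, Matrix.add_apply, Matrix.mul_apply, conjTranspose_apply,
      f1, outer, f1vec, fstarvec, f2vec, vecMulVec_apply, Pi.star_apply, Complex.star_def,
      Complex.conj_ofReal, Matrix.cons_val_zero, Matrix.cons_val_one, Matrix.head_cons,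
      Matrix.one_apply, Fin.sum_univ_two, Fin.mk_zero, Fin.mk_one, _root_.map_mul, Complex.conj_conj,
      Matrix.cons_val', Matrix.empty_val', Matrix.cons_val_fin_one]
    norm_cast
    norm_num
    nlinarith [h2, h3, hs4, hm1, hm2, hm3, hm4]

lemma kraus2 : ∑ i, K i * f1 2 * (K i)ᴴ = f1 2 := by
  ext i j
  fin_cases i <;> fin_cases j <;>
  · simp only [K, Fin.sum_univ_two, Matrix.add_apply, Matrix.mul_apply, conjTranspose_apply,
      f1, outer, f1vec, fstarvec, f2vec, vecMulVec_apply, Pi.star_apply, Complex.star_def,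
      Complex.conj_ofReal, Matrix.cons_val_zero, Matrix.cons_val_one, Matrix.head_cons,
      Fin.mk_zero, Fin.mk_one, _root_.map_mul, Complex.conj_conj,
      Matrix.cons_val', Matrix.empty_val', Matrix.cons_val_fin_one]
    norm_cast
    try norm_num
    try nlinarith [h2, h3, hs4, hm1, hm2, hm3, hm4]

lemma kraus3 : ∑ i, K i * outer f2vec * (K i)ᴴ = outer fstarvec := by
  ext i j
  fin_cases i <;> fin_cases j <;>
  · simp only [K, Fin.sum_univ_two, Matrix.add_apply, Matrix.mul_apply, conjTranspose_apply,
      f1, outer, f1vec, fstarvec, f2vec, vecMulVec_apply, Pi.star_apply, Complex.star_def,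
      Complex.conj_ofReal, Matrix.cons_val_zero, Matrix.cons_val_one, Matrix.head_cons,
      Fin.mk_zero, Fin.mk_one, _root_.map_mul, Complex.conj_conj,
      Matrix.cons_val', Matrix.empty_val', Matrix.cons_val_fin_one]
    norm_cast
    try norm_num
    try nlinarith [h2, h3, hs4, hm1, hm2, hm3, hm4]

theorem stmt16 :
    T1 (outer fstarvec) = (3 + Real.sqrt 3) / 2 ∧
    T1 (outer f2vec) = 2 ∧
    (3 + Real.sqrt 3) / 2 > 2 ∧
    ∃ (m : ℕ) (K : Fin m → Mat 2),
      (∑ i, (K i)ᴴ * K i = 1) ∧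
      (∑ i, K i * f1 2 * (K i)ᴴ = f1 2) ∧
      (∑ i, K i * outer f2vec * (K i)ᴴ = outer fstarvec) ∧
      T1 (∑ i, K i * outer f2vec * (K i)ᴴ) > T1 (outer f2vec) := by
  have hgt : (3 + Real.sqrt 3) / 2 > 2 := by nlinarith [h3, Real.sqrt_nonneg 3]
  refine ⟨T1star, T1f2, hgt, 2, K, kraus1, kraus2, kraus3, ?_⟩
  rw [kraus3, T1star, T1f2]
  exact hgt
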